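/- Let Λ be a ring, i an idempotent of Λ, and suppose i is primitive in the fixed-point subring Λ^P under an action of a group P on Λ by ring automorphisms. Then the module Λi (with Λ acting by left multiplication and P acting via the correspondence with right translation) is indecomposable as a module whenever End of it is local; specifically, the endomorphism ring of Λi as a Λ-P bimodule is isomorphic to (iΛi)^P, so if i is a primitive idempotent of Λ^P ∩ iΛi = (iΛi)^P then Λi is indecomposable. -/

import Mathlib

section

variable (F Λ : Type) [Field F] [Ring Λ] [Algebra F Λ]
variable (P : Type) [Group P]

/-- The action of `x ∈ P` on the left ideal `Λi`, induced by the algebra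
automorphism `φ x` (which fixes `i`); this is the abstract version of the right
translation action. -/
def cornerAct (φ : P →* (Λ ≃ₐ[F] Λ)) (i : Λ) (hfix : ∀ x : P, φ x i = i) (x : P)
    (v : Submodule.span Λ ({i} : Set Λ)) : Submodule.span Λ ({i} : Set Λ) :=
  ⟨φ x (v : Λ), by
    obtain ⟨a, ha⟩ := Submodule.mem_span_singleton.mp v.2
    rw [← ha, smul_eq_mul, map_mul, hfix]
    exact Submodule.mem_span_singleton.mpr ⟨φ x a, by rw [smul_eq_mul]⟩⟩

/-- The endomorphism ring of `Λi` as a `Λ`-`P`-bimodule: the `Λ`-linear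
endomorphisms of `Λi` commuting with the `P`-action. -/
def bimoduleEnd (φ : P →* (Λ ≃ₐ[F] Λ)) (i : Λ) (hfix : ∀ x : P, φ x i = i) :
    Subring (Module.End Λ (Submodule.span Λ ({i} : Set Λ))) where
  carrier := {f | ∀ (x : P) (v : Submodule.span Λ ({i} : Set Λ)),
    f (cornerAct F Λ P φ i hfix x v) = cornerAct F Λ P φ i hfix x (f v)}
  one_mem' := by intro x v; rfl
  mul_mem' := by
    intro f g hf hg x v
    simp only [Module.End.mul_apply]
    rw [hg x v, hf x (g v)]
  zero_mem' := by
    intro x v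
    simp only [LinearMap.zero_apply]
    apply Subtype.ext
    simp [cornerAct]
  add_mem' := by
    intro f g hf hg x v
    simp only [LinearMap.add_apply]
    rw [hf x v, hg x v]
    apply Subtype.ext
    simp [cornerAct, map_add]
  neg_mem' := by
    intro f hf x v
    simp only [LinearMap.neg_apply]
    rw [hf x v]
    apply Subtype.ext
    simp [cornerAct]

/-- Let `Λ` be a finite-dimensional algebra over a field `F`, `P` a finite group
acting on `Λ` by `F`-algebra automorphisms via `φ`, and `i` a `P`-fixed idempotent.
Then the endomorphism ring of `Λi` as a `Λ`-`P`-bimodule is isomorphic (via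
`σ ↦ σ(i)`, anti-multiplicatively, i.e. to the opposite ring) to
`(iΛi)^P = {a | i·a·i = a, φ x a = a}`; consequently, if `i` is a primitive
idempotent of `(iΛi)^P` then `Λi` is indecomposable as a bimodule (its
endomorphism ring has no nontrivial idempotents). -/

private lemma ia_eq {Λ : Type} [Ring Λ] {i a : Λ} (hi : i * i = i)
    (hA : i * a * i = a) : i * a = a ∧ a * i = a := by
  constructor
  · have h : i * (i * a * i) = i * a * i := by rw [← mul_assoc, ← mul_assoc, hi]
    rwa [hA] at h
  · have h : i * a * i * i = i * a * i := by rw [mul_assoc (i * a), hi]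
    rwa [hA] at h

private lemma corner_key {Λ : Type} [Ring Λ] (i : Λ) (hi : i * i = i)
    (f : Module.End Λ (Submodule.span Λ ({i} : Set Λ)))
    (v : Submodule.span Λ ({i} : Set Λ)) :
    (f v : Λ) = (v : Λ) * (f ⟨i, Submodule.mem_span_singleton_self i⟩ : Λ) := by
  set e0 : Submodule.span Λ ({i} : Set Λ) := ⟨i, Submodule.mem_span_singleton_self i⟩ with he0
  have he : e0 = i • e0 := Subtype.ext (by simp [he0, smul_eq_mul, hi])
  have hia : (f e0 : Λ) = i * (f e0 : Λ) := by
    conv_lhs => rw [he, map_smul]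
    simp [smul_eq_mul]
  obtain ⟨c, hc⟩ := Submodule.mem_span_singleton.mp v.2
  have hv : v = c • e0 := Subtype.ext (by simp [he0, ← hc])
  rw [hv, map_smul]
  simp only [SetLike.val_smul, smul_eq_mul, mul_assoc]
  rw [← hia]

private lemma span_mul_i {Λ : Type} [Ring Λ] (i : Λ) (hi : i * i = i)
    (v : Submodule.span Λ ({i} : Set Λ)) : (v : Λ) * i = v := by
  obtain ⟨c, hc⟩ := Submodule.mem_span_singleton.mp v.2
  rw [← hc, smul_eq_mul, mul_assoc, hi]

set_option maxHeartbeats 1000000 in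
theorem bimodule_end_iso_and_indecomposable
    [FiniteDimensional F Λ] [Finite P]
    (φ : P →* (Λ ≃ₐ[F] Λ)) (i : Λ) (hi : i * i = i) (hfix : ∀ x : P, φ x i = i) :
    (∃ e : (bimoduleEnd F Λ P φ i hfix) ≃
        {a : Λ // i * a * i = a ∧ ∀ x : P, φ x a = a},
      (∀ f, (e f : Λ) =
        ((f : Module.End Λ (Submodule.span Λ ({i} : Set Λ)))
          ⟨i, Submodule.mem_span_singleton_self i⟩ : Λ)) ∧
      (∀ f g, (e (f * g) : Λ) = (e g : Λ) * (e f : Λ)) ∧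
      (∀ f g, (e (f + g) : Λ) = (e f : Λ) + (e g : Λ))) ∧
    ((∀ a b : Λ, (i * a * i = a ∧ ∀ x : P, φ x a = a) →
        (i * b * i = b ∧ ∀ x : P, φ x b = b) →
        a * a = a → b * b = b → a * b = 0 → b * a = 0 → a + b = i →
        a = 0 ∨ b = 0) →
      ∀ f : (bimoduleEnd F Λ P φ i hfix), f * f = f → f = 0 ∨ f = 1) := by
  classical
  set S := Submodule.span Λ ({i} : Set Λ) with hS
  set e0 : S := ⟨i, Submodule.mem_span_singleton_self i⟩ with he0
  have hval : ∀ f : bimoduleEnd F Λ P φ i hfix,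
      i * ((f : Module.End Λ S) e0 : Λ) * i = ((f : Module.End Λ S) e0 : Λ) ∧
      ∀ x : P, φ x ((f : Module.End Λ S) e0 : Λ) = ((f : Module.End Λ S) e0 : Λ) := by
    intro f
    set a : Λ := ((f : Module.End Λ S) e0 : Λ) with ha
    have hia : i * a = a := (corner_key i hi (f : Module.End Λ S) e0).symm
    have hai : a * i = a := span_mul_i i hi _
    refine ⟨by rw [hia, hai], fun x => ?_⟩
    have hcomm := f.2 x e0
    have hce : cornerAct F Λ P φ i hfix x e0 = e0 :=
      Subtype.ext (by simp [cornerAct, he0, hfix])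
    rw [hce] at hcomm
    have h2 := congrArg (fun w : S => (w : Λ)) hcomm
    simpa [cornerAct, ha] using h2.symm
  have hmemS : ∀ (a : Λ), i * a * i = a → ∀ v : S, (v : Λ) * a ∈ S := by
    intro a hA v
    obtain ⟨hia, hai⟩ := ia_eq hi hA
    obtain ⟨c, hc⟩ := Submodule.mem_span_singleton.mp v.2
    refine Submodule.mem_span_singleton.mpr ⟨c * a, ?_⟩
    rw [smul_eq_mul, mul_assoc, hai, ← hc, smul_eq_mul, mul_assoc, hia]
  have mkmem : ∀ (a : Λ) (hA : i * a * i = a) (hAf : ∀ x : P, φ x a = a),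
      ({ toFun := fun v => ⟨(v : Λ) * a, hmemS a hA v⟩
         map_add' := by intro u v; apply Subtype.ext; simp [add_mul]
         map_smul' := by
           intro c v; apply Subtype.ext
           simp [smul_eq_mul, mul_assoc] } : Module.End Λ S) ∈ bimoduleEnd F Λ P φ i hfix := by
    intro a hA hAf x v
    apply Subtype.ext
    show (φ x (v : Λ)) * a = φ x ((v : Λ) * a)
    rw [map_mul, hAf]
  set mk : {a : Λ // i * a * i = a ∧ ∀ x : P, φ x a = a} → bimoduleEnd F Λ P φ i hfix :=
    fun a => ⟨_, mkmem a.1 a.2.1 a.2.2⟩ with hmk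
  have hmk_apply : ∀ a v, (((mk a : bimoduleEnd F Λ P φ i hfix) : Module.End Λ S) v : Λ)
      = (v : Λ) * (a : Λ) := fun a v => rfl
  set e : (bimoduleEnd F Λ P φ i hfix) ≃ {a : Λ // i * a * i = a ∧ ∀ x : P, φ x a = a} :=
    { toFun := fun f => ⟨((f : Module.End Λ S) e0 : Λ), hval f⟩
      invFun := mk
      left_inv := by
        intro f
        apply Subtype.ext
        apply LinearMap.ext
        intro v
        apply Subtype.ext
        rw [hmk_apply]
        exact (corner_key i hi (f : Module.End Λ S) v).symm
      right_inv := by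
        intro a
        apply Subtype.ext
        show (i : Λ) * (a : Λ) = a
        exact (ia_eq hi a.2.1).1 } with hedef
  constructor
  · refine ⟨e, fun f => rfl, fun f g => ?_, fun f g => ?_⟩
    · show (((f * g : bimoduleEnd F Λ P φ i hfix) : Module.End Λ S) e0 : Λ)
        = ((g : Module.End Λ S) e0 : Λ) * ((f : Module.End Λ S) e0 : Λ)
      have hm : ((f * g : bimoduleEnd F Λ P φ i hfix) : Module.End Λ S)
          = (f : Module.End Λ S) * (g : Module.End Λ S) := rfl
      rw [hm, Module.End.mul_apply]
      exact corner_key i hi (f : Module.End Λ S) _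
    · rfl
  · intro H f hf
    set a : Λ := ((f : Module.End Λ S) e0 : Λ) with ha
    obtain ⟨hA, hAf⟩ := hval f
    have hia : i * a = a := (ia_eq hi hA).1
    have hai : a * i = a := (ia_eq hi hA).2
    have haa : a * a = a := by
      have h1 : ((f : Module.End Λ S) ((f : Module.End Λ S) e0) : Λ) = a * a :=
        corner_key i hi (f : Module.End Λ S) ((f : Module.End Λ S) e0)
      have hm : ((f * f : bimoduleEnd F Λ P φ i hfix) : Module.End Λ S)
          = (f : Module.End Λ S) := by rw [hf]
      have h2 : (f : Module.End Λ S) ((f : Module.End Λ S) e0)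
          = (f : Module.End Λ S) e0 := DFunLike.congr_fun hm e0
      rw [h2] at h1
      exact h1.symm
    rcases H a (i - a) ⟨hA, hAf⟩
        ⟨by simp only [mul_sub, sub_mul, hi, hia, hai], fun x => by rw [map_sub, hfix, hAf]⟩
        haa
        (by rw [sub_mul, mul_sub, mul_sub, hi, hia, hai, haa]; abel)
        (by rw [mul_sub, hai, haa, sub_self])
        (by rw [sub_mul, hia, haa, sub_self])
        (by abel) with h0 | h1
    · left
      apply Subtype.ext
      apply LinearMap.ext
      intro v
      apply Subtype.ext
      rw [corner_key i hi (f : Module.End Λ S) v, ← ha, h0, mul_zero]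
      rfl
    · right
      have hae : a = i := by rwa [sub_eq_zero, eq_comm] at h1
      apply Subtype.ext
      apply LinearMap.ext
      intro v
      apply Subtype.ext
      rw [corner_key i hi (f : Module.End Λ S) v, ← ha, hae, span_mul_i i hi v]
      rfl

end
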